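/- Let n = 2^m − 1 with m ≥ 2, M = 2^n/(n+1), and M^□ = M/2 + ⌈M/(2n)⌉. Then M^□ · n > 2^{n−1}; consequently, by the Hamming (ball-packing) bound, every binary code with M^□ codewords and minimum distance 3 has block length at least n, i.e., n_2(M^□, 3) ≥ n. -/

import Mathlib

open Finset

lemma aux_flip_dist_le {ℓ : ℕ} (c : Fin ℓ → Fin 2) (a : Option (Fin ℓ)) :
    hammingDist c (a.elim c (fun i => Function.update c i (c i + 1))) ≤ 1 := by
  cases a with
  | none => simp
  | some i =>
    simp only [Option.elim]
    have : ({j | c j ≠ Function.update c i (c i + 1) j} : Finset (Fin ℓ)) ⊆ {i} := by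
      intro j hj
      simp only [mem_filter, mem_univ, true_and] at hj
      by_contra hji
      simp only [mem_singleton] at hji
      rw [Function.update_of_ne hji] at hj
      exact hj rfl
    calc hammingDist c (Function.update c i (c i + 1))
        = ({j | c j ≠ Function.update c i (c i + 1) j} : Finset (Fin ℓ)).card := rfl
      _ ≤ ({i} : Finset (Fin ℓ)).card := Finset.card_le_card this
      _ = 1 := Finset.card_singleton i

lemma aux_packing {ℓ : ℕ} (C : Finset (Fin ℓ → Fin 2))
    (hC : ∀ x ∈ C, ∀ y ∈ C, x ≠ y → 3 ≤ hammingDist x y) :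
    C.card * (ℓ + 1) ≤ 2 ^ ℓ := by
  classical
  set F : (Fin ℓ → Fin 2) × Option (Fin ℓ) → (Fin ℓ → Fin 2) :=
    fun p => p.2.elim p.1 (fun i => Function.update p.1 i (p.1 i + 1)) with hF
  have hinj : Set.InjOn F ↑(C ×ˢ (univ : Finset (Option (Fin ℓ)))) := by
    rintro ⟨c, a⟩ hca ⟨c', a'⟩ hca' heq
    simp only [coe_product, Set.mem_prod, mem_coe] at hca hca'
    have hcc' : c = c' := by
      by_contra hne
      have h3 := hC c hca.1 c' hca'.1 hne
      have h1 : hammingDist c (F (c, a)) ≤ 1 := aux_flip_dist_le c a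
      have h2 : hammingDist c' (F (c', a')) ≤ 1 := aux_flip_dist_le c' a'
      rw [heq] at h1
      have htri := hammingDist_triangle c (F (c', a')) c'
      rw [hammingDist_comm (F (c', a')) c'] at htri
      omega
    subst hcc'
    have hx : ∀ x : Fin 2, x + 1 ≠ x := by decide
    congr 1
    match a, a' with
    | none, none => rfl
    | none, some j =>
      exfalso
      have := congrFun heq j
      simp only [hF, Option.elim, Function.update_self] at this
      exact hx (c j) this.symm
    | some i, none =>
      exfalso
      have := congrFun heq i
      simp only [hF, Option.elim, Function.update_self] at this
      exact hx (c i) this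
    | some i, some j =>
      by_cases hij : i = j
      · rw [hij]
      · exfalso
        have := congrFun heq i
        simp only [hF, Option.elim, Function.update_self,
          Function.update_of_ne hij] at this
        exact hx (c i) this
  have hmaps : ∀ p ∈ C ×ˢ (univ : Finset (Option (Fin ℓ))),
      F p ∈ (univ : Finset (Fin ℓ → Fin 2)) := fun p _ => mem_univ _
  have := Finset.card_le_card_of_injOn F hmaps hinj
  simpa [Finset.card_product, Fintype.card_option, Fintype.card_fun] using this

/-- with `n = 2^m − 1` (`m ≥ 2`), `M = 2^n/(n+1)`, and
`M□ = M/2 + ⌈M/(2n)⌉`, one has `M□·n > 2^(n−1)`; hence by the ball-packing bound every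
binary code with `M□` codewords and minimum distance `3` has block length at least `n`. -/
theorem hamming_packing_length_bound (m : ℕ) (hm : 2 ≤ m) (n M Mbox : ℕ)
    (hn : n = 2 ^ m - 1) (hM : M = 2 ^ n / (n + 1))
    (hMbox : Mbox = M / 2 + ⌈(M : ℚ) / (2 * n)⌉₊) :
    2 ^ (n - 1) < Mbox * n ∧
    ∀ (ℓ : ℕ) (C : Finset (Fin ℓ → Fin 2)), C.card = Mbox →
      (∀ x ∈ C, ∀ y ∈ C, x ≠ y → 3 ≤ hammingDist x y) → n ≤ ℓ := by
  have hpow : ∀ k : ℕ, k + 1 ≤ 2 ^ k := fun k => Nat.lt_two_pow_self (n := k)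
  have h2m : m + 2 ≤ 2 ^ m := by
    have h1 : m - 1 < 2 ^ (m - 1) := Nat.lt_two_pow_self
    have h2 : 2 ^ m = 2 * 2 ^ (m - 1) := by
      rw [← pow_succ']
      congr 1
      omega
    omega
  have hn1 : n + 1 = 2 ^ m := by
    have : 1 ≤ 2 ^ m := Nat.one_le_two_pow
    omega
  have hmn : m + 1 ≤ n := by omega
  have hn3 : 3 ≤ n := by omega
  have hMpow : M = 2 ^ (n - m) := by
    rw [hM, hn1, Nat.pow_div (by omega) (by omega)]
  have hk1 : 1 ≤ n - m := by omega
  have hnodd : n % 2 = 1 := by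
    have h2 : 2 ∣ 2 ^ m := dvd_pow_self 2 (by omega)
    omega
  have hndvd : ¬ (2 * n ∣ M) := by
    intro h
    have hdn : n ∣ M := dvd_trans ⟨2, by ring⟩ h
    rw [hMpow] at hdn
    have hcop : Nat.Coprime n 2 :=
      Nat.coprime_two_right.mpr (Nat.odd_iff.mpr hnodd)
    have := (hcop.pow_right (n - m)).eq_one_of_dvd hdn
    omega
  have hq : ((M : ℚ) / (2 * n)) < (⌈(M : ℚ) / (2 * n)⌉₊ : ℚ) := by
    rcases lt_or_eq_of_le (Nat.le_ceil ((M : ℚ) / (2 * n))) with h | h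
    · exact h
    · exfalso
      apply hndvd
      have hn0 : (0 : ℚ) < 2 * (n : ℚ) := by
        have : (0:ℚ) < (n:ℚ) := by exact_mod_cast (by omega : 0 < n)
        linarith
      have heq1 : (M : ℚ) = (⌈(M : ℚ) / (2 * n)⌉₊ : ℚ) * (2 * n) := by
        field_simp at h
        linarith
      have heq2 : (M : ℚ) = ((⌈(M : ℚ) / (2 * n)⌉₊ * (2 * n) : ℕ) : ℚ) := by
        push_cast
        linarith
      have hMeq : M = ⌈(M : ℚ) / (2 * n)⌉₊ * (2 * n) := Nat.cast_injective heq2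
      exact ⟨⌈(M : ℚ) / (2 * n)⌉₊, hMeq.trans (Nat.mul_comm _ _)⟩
  have hMeven : 2 ∣ M := by
    rw [hMpow]; exact dvd_pow_self 2 (by omega)
  have hhalf : ((M / 2 : ℕ) : ℚ) = (M : ℚ) / 2 := by
    rcases hMeven with ⟨t, ht⟩
    subst ht
    push_cast [Nat.mul_div_cancel_left t (by norm_num : 0 < 2)]
    ring
  have main : 2 ^ (n - 1) < Mbox * n := by
    rw [← Nat.cast_lt (α := ℚ)]
    push_cast [hMbox]
    have hn0 : (0 : ℚ) < (n : ℚ) := by exact_mod_cast (by omega : 0 < n)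
    have step : (M : ℚ) / (2 * n) * n < (⌈(M : ℚ) / (2 * n)⌉₊ : ℚ) * n :=
      mul_lt_mul_of_pos_right hq hn0
    have hsimp : ((M / 2 : ℕ) : ℚ) * n + (M : ℚ) / (2 * n) * n = (M : ℚ) * (n + 1) / 2 := by
      rw [hhalf]; field_simp
    have hfinal : (M : ℚ) * ((n : ℚ) + 1) / 2 = (2 : ℚ) ^ (n - 1) := by
      rw [hMpow]
      have : ((n : ℚ) + 1) = ((2 : ℚ)) ^ m := by
        exact_mod_cast congrArg (Nat.cast : ℕ → ℚ) hn1
      rw [this]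
      push_cast
      rw [← pow_add]
      have h1 : n - m + m = n := by omega
      have h2 : n = (n - 1) + 1 := by omega
      rw [h1]
      nth_rewrite 1 [h2]
      rw [pow_succ]
      ring
    calc ((2 : ℚ)) ^ (n - 1)
        = ((M / 2 : ℕ) : ℚ) * n + (M : ℚ) / (2 * n) * n := by rw [hsimp, hfinal]
      _ < ((M / 2 : ℕ) : ℚ) * n + (⌈(M : ℚ) / (2 * n)⌉₊ : ℚ) * n := by linarith
      _ = (((M / 2 : ℕ) : ℚ) + (⌈(M : ℚ) / (2 * n)⌉₊ : ℚ)) * n := by ring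
  refine ⟨main, ?_⟩
  intro ℓ C hcard hdist
  by_contra hlt
  push_neg at hlt
  have hball := aux_packing C hdist
  rw [hcard] at hball
  have hle : ℓ + 1 ≤ n := by omega
  have key : n * 2 ^ ℓ ≤ (ℓ + 1) * 2 ^ (n - 1) := by
    have h1 : 2 ^ (n - 1) = 2 ^ ℓ * 2 ^ (n - 1 - ℓ) := by
      rw [← pow_add]; congr 1; omega
    have h2 : n - 1 - ℓ + 1 ≤ 2 ^ (n - 1 - ℓ) := hpow _
    have h3 : n ≤ (ℓ + 1) * 2 ^ (n - 1 - ℓ) := by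
      calc n = ℓ + (n - 1 - ℓ) + 1 := by omega
        _ ≤ (ℓ + 1) * (n - 1 - ℓ + 1) := by nlinarith [Nat.zero_le (ℓ * (n - 1 - ℓ))]
        _ ≤ (ℓ + 1) * 2 ^ (n - 1 - ℓ) := Nat.mul_le_mul_left _ h2
    calc n * 2 ^ ℓ ≤ ((ℓ + 1) * 2 ^ (n - 1 - ℓ)) * 2 ^ ℓ := Nat.mul_le_mul_right _ h3
      _ = (ℓ + 1) * 2 ^ (n - 1) := by rw [h1]; ring
  have hchain : Mbox * n * 2 ^ ℓ ≤ 2 ^ ℓ * 2 ^ (n - 1) := by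
    calc Mbox * n * 2 ^ ℓ = Mbox * (n * 2 ^ ℓ) := by ring
      _ ≤ Mbox * ((ℓ + 1) * 2 ^ (n - 1)) := Nat.mul_le_mul_left _ key
      _ = (Mbox * (ℓ + 1)) * 2 ^ (n - 1) := by ring
      _ ≤ 2 ^ ℓ * 2 ^ (n - 1) := Nat.mul_le_mul_right _ hball
  have hpos : 0 < 2 ^ ℓ := Nat.pow_pos (by norm_num)
  nlinarith [main, hchain, hpos]
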